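/- In the gap instance with parameters c > 1, n ≥ 1 and B > 0, every fractional prefix solution b satisfies E[value(b)] ≤ n·α·B·(2/(c+1) + 1/n). Hence the ratio between the optimal expected value n·α·B and the best expected value of a fractional prefix solution is at least 1/(2/(c+1) + 1/n), which tends to infinity as c and n grow. -/

import Mathlib

open Finset

/-- Value obtained in scenario `σ` of the gap instance: there are `2n` keywords with
`cpc i = c^i`; in scenario `σ ∈ {1,…,n}` keywords `2σ−1` and `2σ` each receive
`B / c^(2σ−1)` clicks and all other keywords receive none. -/
noncomputable def gapVal (c B : ℝ) (n : ℕ) (b : ℕ → ℝ) (σ : ℕ) : ℝ :=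
  (∑ i ∈ Finset.Icc 1 (2 * n),
      b i * (if i = 2 * σ - 1 ∨ i = 2 * σ then B / c ^ (2 * σ - 1) else 0)) /
    max 1 ((∑ i ∈ Finset.Icc 1 (2 * n),
      b i * c ^ i * (if i = 2 * σ - 1 ∨ i = 2 * σ then B / c ^ (2 * σ - 1) else 0)) / B)

/-- Expected value in the gap instance: scenario `σ` has probability `α · c^(2σ−1)`,
where `α = 1 / ∑_{τ=1}^n c^(2τ−1)`. -/
noncomputable def gapEv (c B : ℝ) (n : ℕ) (b : ℕ → ℝ) : ℝ :=
  ∑ σ ∈ Finset.Icc 1 n,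
    ((∑ τ ∈ Finset.Icc 1 n, c ^ (2 * τ - 1))⁻¹ * c ^ (2 * σ - 1)) * gapVal c B n b σ

lemma sum_pair_ite (N a a' : ℕ) (hab : a ≠ a') (ha : a ∈ Finset.Icc 1 N)
    (hb : a' ∈ Finset.Icc 1 N) (g : ℕ → ℝ) :
    ∑ i ∈ Finset.Icc 1 N, (if i = a ∨ i = a' then g i else 0) = g a + g a' := by
  have h : ∀ i ∈ Finset.Icc 1 N, (if i = a ∨ i = a' then g i else 0)
      = (if i = a then g i else 0) + (if i = a' then g i else 0) := by
    intro i _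
    by_cases h1 : i = a <;> by_cases h2 : i = a' <;> simp_all
  rw [Finset.sum_congr rfl h, Finset.sum_add_distrib,
      Finset.sum_ite_eq' _ a g, Finset.sum_ite_eq' _ a' g, if_pos ha, if_pos hb]


/-- **Gap instance: every fractional prefix solution is poor.** Its expected value is at most
`n·α·B·(2/(c+1) + 1/n)`; hence the ratio between the optimal expected value `n·α·B` and the
best expected value of a fractional prefix solution is at least `1/(2/(c+1) + 1/n)`. -/
theorem stmt_11 (c : ℝ) (hc : 1 < c) (n : ℕ) (hn : 1 ≤ n) (B : ℝ) (hB : 0 < B)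
    (b : ℕ → ℝ) (hb : ∀ i, 0 ≤ b i ∧ b i ≤ 1)
    (hpre : ∃ istar ∈ Finset.Icc 1 (2 * n),
      (∀ i ∈ Finset.Icc 1 (2 * n), i < istar → b i = 1) ∧
      ∀ i ∈ Finset.Icc 1 (2 * n), istar < i → b i = 0) :
    gapEv c B n b ≤
      n * (∑ τ ∈ Finset.Icc 1 n, c ^ (2 * τ - 1))⁻¹ * B * (2 / (c + 1) + 1 / n) ∧
    (0 < gapEv c B n b →
      1 / (2 / (c + 1) + 1 / n) ≤
        (n * (∑ τ ∈ Finset.Icc 1 n, c ^ (2 * τ - 1))⁻¹ * B) / gapEv c B n b) := by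
  obtain ⟨istar, hist, hpre1, hpre0⟩ := hpre
  rw [Finset.mem_Icc] at hist
  have hc0 : (0:ℝ) < c := lt_trans one_pos hc
  set S := ∑ τ ∈ Finset.Icc 1 n, c ^ (2 * τ - 1) with hSdef
  have hS : 0 < S := by
    apply Finset.sum_pos (fun τ _ => by positivity)
    exact Finset.nonempty_Icc.mpr hn
  set f : ℕ → ℝ := fun σ => (b (2*σ-1) + b (2*σ)) / max 1 (b (2*σ-1) + c * b (2*σ)) with hf
  have hmaxpos : ∀ σ : ℕ, (0:ℝ) < max 1 (b (2*σ-1) + c * b (2*σ)) :=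
    fun σ => lt_of_lt_of_le one_pos (le_max_left _ _)
  -- rewrite each term
  have hterm : ∀ σ ∈ Finset.Icc 1 n,
      (S⁻¹ * c ^ (2*σ-1)) * gapVal c B n b σ = S⁻¹ * B * f σ := by
    intro σ hσ
    rw [Finset.mem_Icc] at hσ
    have hk : 2*σ - 1 + 1 = 2*σ := by omega
    have hck : c ^ (2*σ-1) ≠ 0 := pow_ne_zero _ (ne_of_gt hc0)
    have hne : 2*σ-1 ≠ 2*σ := by omega
    have hm1 : 2*σ-1 ∈ Finset.Icc 1 (2*n) := by rw [Finset.mem_Icc]; omega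
    have hm2 : 2*σ ∈ Finset.Icc 1 (2*n) := by rw [Finset.mem_Icc]; omega
    have hnum : ∑ i ∈ Finset.Icc 1 (2*n),
        b i * (if i = 2*σ-1 ∨ i = 2*σ then B / c ^ (2*σ-1) else 0)
        = (b (2*σ-1) + b (2*σ)) * (B / c ^ (2*σ-1)) := by
      simp only [mul_ite, mul_zero]
      rw [sum_pair_ite (2*n) (2*σ-1) (2*σ) hne hm1 hm2]
      ring
    have hden : (∑ i ∈ Finset.Icc 1 (2*n),
        b i * c ^ i * (if i = 2*σ-1 ∨ i = 2*σ then B / c ^ (2*σ-1) else 0)) / B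
        = b (2*σ-1) + c * b (2*σ) := by
      simp only [mul_ite, mul_zero]
      rw [sum_pair_ite (2*n) (2*σ-1) (2*σ) hne hm1 hm2]
      rw [← hk, pow_succ]
      simp only [Nat.add_sub_cancel]
      field_simp
    unfold gapVal
    rw [hnum, hden, hf]
    have hM : max 1 (b (2*σ-1) + c * b (2*σ)) ≠ 0 := ne_of_gt (hmaxpos σ)
    field_simp
  have hEv : gapEv c B n b = S⁻¹ * B * ∑ σ ∈ Finset.Icc 1 n, f σ := by
    unfold gapEv
    rw [Finset.mul_sum]
    exact Finset.sum_congr rfl hterm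
  -- pointwise bound on f
  set σ0 := (istar + 1) / 2 with hσ0
  have hfb : ∀ σ ∈ Finset.Icc 1 n, f σ ≤ 2/(c+1) + (if σ = σ0 then (1:ℝ) else 0) := by
    intro σ hσ
    rw [Finset.mem_Icc] at hσ
    have h2c : (0:ℝ) < c + 1 := by linarith
    have hdivnn : (0:ℝ) ≤ 2/(c+1) := by positivity
    by_cases hσσ : σ = σ0
    · rw [if_pos hσσ]
      have hf1 : f σ ≤ 1 := by
        rw [hf]
        apply (div_le_one (hmaxpos σ)).mpr
        refine le_max_of_le_right ?_
        have := (hb (2*σ)).1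
        nlinarith
      linarith
    · rw [if_neg hσσ, add_zero]
      have hm1 : 2*σ-1 ∈ Finset.Icc 1 (2*n) := by rw [Finset.mem_Icc]; omega
      have hm2 : 2*σ ∈ Finset.Icc 1 (2*n) := by rw [Finset.mem_Icc]; omega
      rcases lt_or_gt_of_ne hσσ with hlt | hgt
      · -- σ < σ0 : both coordinates equal 1
        have hb1 : b (2*σ-1) = 1 := hpre1 _ hm1 (by omega)
        have hb2 : b (2*σ) = 1 := hpre1 _ hm2 (by omega)
        rw [hf]
        simp only [hb1, hb2]
        rw [show (1:ℝ) + c * 1 = c + 1 by ring, max_eq_right (by linarith : (1:ℝ) ≤ c + 1)]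
        norm_num
      · -- σ0 < σ : both coordinates equal 0
        have hb1 : b (2*σ-1) = 0 := hpre0 _ hm1 (by omega)
        have hb2 : b (2*σ) = 0 := hpre0 _ hm2 (by omega)
        rw [hf]
        simp only [hb1, hb2]
        simpa using hdivnn
  have hσ0mem : σ0 ∈ Finset.Icc 1 n := by rw [Finset.mem_Icc]; omega
  have hsum : ∑ σ ∈ Finset.Icc 1 n, f σ ≤ n * (2/(c+1)) + 1 := by
    calc ∑ σ ∈ Finset.Icc 1 n, f σ
        ≤ ∑ σ ∈ Finset.Icc 1 n, (2/(c+1) + (if σ = σ0 then (1:ℝ) else 0)) :=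
          Finset.sum_le_sum hfb
      _ = n * (2/(c+1)) + 1 := by
          rw [Finset.sum_add_distrib, Finset.sum_const,
            Finset.sum_ite_eq' _ σ0 (fun _ => (1:ℝ)), if_pos hσ0mem, Nat.card_Icc]
          simp [nsmul_eq_mul]
  have hn0 : (n:ℝ) ≠ 0 := Nat.cast_ne_zero.mpr (by omega)
  have key : gapEv c B n b ≤ n * S⁻¹ * B * (2 / (c + 1) + 1 / n) := by
    rw [hEv]
    have h1 : S⁻¹ * B * ∑ σ ∈ Finset.Icc 1 n, f σ ≤ S⁻¹ * B * (n * (2/(c+1)) + 1) := by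
      apply mul_le_mul_of_nonneg_left hsum (by positivity)
    have h2 : S⁻¹ * B * ((n:ℝ) * (2/(c+1)) + 1) = n * S⁻¹ * B * (2 / (c + 1) + 1 / n) := by
      field_simp
    linarith
  refine ⟨key, fun hpos => ?_⟩
  have hK : 0 < 2 / (c + 1) + 1 / n := by
    have h2c : (0:ℝ) < c + 1 := by linarith
    have : (0:ℝ) < (n:ℝ) := by positivity
    positivity
  rw [div_le_div_iff₀ hK hpos, one_mul]
  exact key
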